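/- Let (k_δ) be the re-indexed Haar-type system k_δ = r_{φ(δ)} ∏_{i=1}^n (1 + δ_i r_{φ(δ₁,…,δ_{i−1})}) with φ injective and increasing along prefixes, and let T_ε be the biased coin (Riesz product convolution) operator. Then the images T_ε k_δ = ε r_{φ(δ)} ∏_{i=1}^n (1 + ε δ_i r_{φ(δ₁,…,δ_{i−1})}), arranged in any order compatible with prefix length, form a martingale difference sequence in L¹ of the Cantor group, and hence a basic sequence with basis constant at most 1 (monotone); consequently the biorthogonal functionals to {T_ε k_δ} all have norm at most 2/ε. -/

import Mathlib

open MeasureTheory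

/-- The Cantor group `{−1,1}^ℕ`, modelled as `ℕ → ℤˣ`. -/
abbrev CantorGroup : Type := ℕ → ℤˣ

/-- The Rademacher function `r_j` (coordinate projection). -/
noncomputable def rad (j : ℕ) (ω : CantorGroup) : ℝ := ((ω j : ℤ) : ℝ)

/-- Interpret a boolean as a sign `±1`. -/
noncomputable def sgn (b : Bool) : ℝ := if b then 1 else -1

/-- The Walsh function `w_A = ∏_{i ∈ A} r_i`. -/
noncomputable def walsh (A : Finset ℕ) (ω : CantorGroup) : ℝ := ∏ j ∈ A, rad j ω

/-- The auxiliary index map: `ρ(∅) = 1`, `ρ(δ) = φ(δ)` for nonempty `δ`. -/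
noncomputable def rho (φ : List Bool → ℕ) (δ : List Bool) : ℕ := if δ = [] then 1 else φ δ

/-- The re-indexed Haar-type system
`k_δ = r_{φ(δ)} ∏_{i=1}^n (1 + δ_i r_{φ(δ₁,…,δ_{i−1})})`. -/
noncomputable def kSys (φ : List Bool → ℕ) (δ : List Bool) (ω : CantorGroup) : ℝ :=
  rad (rho φ δ) ω *
    ∏ i ∈ Finset.range δ.length, (1 + sgn (δ.getD i true) * rad (rho φ (δ.take i)) ω)

/-- The σ-algebra generated by the coordinates `{r_{φ(η)} : η of length < n}`. -/
noncomputable def Gsig (φ : List Bool → ℕ) (n : ℕ) : MeasurableSpace CantorGroup :=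
  MeasurableSpace.comap
    (fun ω => fun δ : {l : List Bool // l.length < n} => ω (rho φ δ.1)) inferInstance


lemma rad_eq_one_or (j ω) : rad j ω = 1 ∨ rad j ω = -1 := by
  unfold rad; rcases Int.units_eq_one_or (ω j) with h | h <;> simp [h]

lemma rad_sq (j ω) : rad j ω * rad j ω = 1 := by
  rcases rad_eq_one_or j ω with h | h <;> simp [h]

lemma abs_rad (j ω) : |rad j ω| = 1 := by
  rcases rad_eq_one_or j ω with h | h <;> simp [h]

lemma rad_meas (j : ℕ) : Measurable (rad j) := by
  unfold rad
  exact (measurable_from_top (f := fun z : ℤ => (z : ℝ))).comp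
    ((measurable_iff_comap_le.mpr le_rfl).comp (measurable_pi_apply j))

lemma walsh_meas (A : Finset ℕ) : Measurable (walsh A) := by
  unfold walsh; exact Finset.measurable_prod A fun j _ => rad_meas j

lemma abs_walsh (A ω) : |walsh A ω| = 1 := by
  unfold walsh; rw [Finset.abs_prod]
  exact Finset.prod_eq_one fun j _ => abs_rad j ω

lemma walsh_integrable (μ : Measure CantorGroup) [IsProbabilityMeasure μ] (A : Finset ℕ) :
    Integrable (walsh A) μ := by
  refine (integrable_const (1:ℝ)).mono' (walsh_meas A).aestronglyMeasurable ?_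
  filter_upwards with ω
  rw [Real.norm_eq_abs, abs_walsh]

lemma walsh_mul_walsh (A B : Finset ℕ) (ω) :
    walsh A ω * walsh B ω = walsh (symmDiff A B) ω := by
  classical
  have h2 : (∏ j ∈ A ∩ B, rad j ω) * ∏ j ∈ A ∩ B, rad j ω = 1 := by
    rw [← Finset.prod_mul_distrib]; exact Finset.prod_eq_one fun j _ => rad_sq j ω
  have hA : walsh A ω = walsh (A \ B) ω * walsh (A ∩ B) ω := by
    unfold walsh
    rw [← Finset.prod_union (Finset.sdiff_disjoint.mono_right Finset.inter_subset_right),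
      Finset.sdiff_union_inter]
  have hB : walsh B ω = walsh (B \ A) ω * walsh (A ∩ B) ω := by
    unfold walsh
    rw [← Finset.prod_union (Finset.sdiff_disjoint.mono_right Finset.inter_subset_left),
      Finset.inter_comm, Finset.sdiff_union_inter]
  have hS : walsh (symmDiff A B) ω = walsh (A \ B) ω * walsh (B \ A) ω := by
    unfold walsh
    rw [symmDiff_def, Finset.sup_eq_union, Finset.prod_union disjoint_sdiff_sdiff]
  rw [hA, hB, hS]
  calc (walsh (A \ B) ω * walsh (A ∩ B) ω) * (walsh (B \ A) ω * walsh (A ∩ B) ω)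
      = (walsh (A \ B) ω * walsh (B \ A) ω) * ((∏ j ∈ A ∩ B, rad j ω) * ∏ j ∈ A ∩ B, rad j ω) := by
        unfold walsh; ring
    _ = walsh (A \ B) ω * walsh (B \ A) ω := by rw [h2, mul_one]

lemma rad_mul_walsh {j : ℕ} {S : Finset ℕ} (h : j ∉ S) (ω) :
    rad j ω * walsh S ω = walsh (insert j S) ω := by
  unfold walsh; rw [Finset.prod_insert h]

lemma rho_inj {φ : List Bool → ℕ} (hφinj : Function.Injective φ) (hφ2 : ∀ δ, 2 ≤ φ δ) :
    Function.Injective (rho φ) := by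
  intro l l' h
  unfold rho at h
  by_cases h1 : l = [] <;> by_cases h2 : l' = [] <;> simp [h1, h2] at h ⊢
  · exact absurd h.symm (by have := hφ2 l'; omega)
  · exact absurd h (by have := hφ2 l; omega)
  · exact hφinj h

section Expand
variable {μ : Measure CantorGroup} [IsProbabilityMeasure μ]

/-- Expansion of a Riesz-type product into Walsh functions. -/
lemma prod_expand (c : ℕ → ℝ) (ι : ℕ → ℕ) (n : ℕ)
    (hι : Set.InjOn ι (Finset.range n)) (ω : CantorGroup) :
    ∏ i ∈ Finset.range n, (1 + c i * rad (ι i) ω)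
      = ∑ S ∈ (Finset.range n).powerset,
          (∏ i ∈ S, c i) * walsh (S.image ι) ω := by
  classical
  have : ∀ i ∈ Finset.range n, (1 + c i * rad (ι i) ω)
      = (fun i => c i * rad (ι i) ω) i + (fun _ => (1:ℝ)) i := fun i _ => by ring
  rw [Finset.prod_congr rfl this, Finset.prod_add]
  refine Finset.sum_congr rfl fun S hS => ?_
  rw [Finset.prod_const_one, mul_one]
  have : walsh (S.image ι) ω = ∏ i ∈ S, rad (ι i) ω := by
    unfold walsh
    exact Finset.prod_image fun x hx y hy hxy =>
      hι (Finset.mem_powerset.mp hS hx) (Finset.mem_powerset.mp hS hy) hxy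
  rw [this, ← Finset.prod_mul_distrib]

lemma integral_prod_expand (hμ : ∀ A : Finset ℕ, A.Nonempty → ∫ ω, walsh A ω ∂μ = 0)
    (c : ℕ → ℝ) (ι : ℕ → ℕ) (n : ℕ) (hι : Set.InjOn ι (Finset.range n)) :
    ∫ ω, ∏ i ∈ Finset.range n, (1 + c i * rad (ι i) ω) ∂μ = 1 := by
  classical
  have h1 : ∀ ω : CantorGroup, ∏ i ∈ Finset.range n, (1 + c i * rad (ι i) ω)
      = ∑ S ∈ (Finset.range n).powerset, (∏ i ∈ S, c i) * walsh (S.image ι) ω :=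
    prod_expand c ι n hι
  rw [integral_congr_ae (Filter.Eventually.of_forall h1)]
  rw [integral_finset_sum _ (fun S _ => (walsh_integrable μ _).const_mul _)]
  rw [Finset.sum_eq_single ∅]
  · simp [walsh, integral_const]
  · intro S hS hSne
    rw [MeasureTheory.integral_const_mul, hμ _ (by simpa using Finset.nonempty_iff_ne_empty.mpr hSne),
      mul_zero]
  · intro h; exact absurd (Finset.empty_mem_powerset _) h

end Expand

section KExp
variable {φ : List Bool → ℕ}

lemma take_injOn (δ : List Bool) : Set.InjOn (fun i => δ.take i) (Finset.range δ.length) := by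
  intro x hx y hy h
  simp only [Finset.coe_range, Set.mem_Iio] at hx hy
  have := congrArg List.length h
  simpa [List.length_take, Nat.min_eq_left (le_of_lt hx), Nat.min_eq_left (le_of_lt hy)]
    using this

lemma rho_take_injOn (hρ : Function.Injective (rho φ)) (δ : List Bool) :
    Set.InjOn (fun i => rho φ (δ.take i)) (Finset.range δ.length) :=
  fun x hx y hy h => take_injOn δ hx hy (hρ h)

lemma rho_self_not_mem (hρ : Function.Injective (rho φ)) (δ : List Bool)
    {S : Finset ℕ} (hS : S ⊆ Finset.range δ.length) :
    rho φ δ ∉ S.image (fun i => rho φ (δ.take i)) := by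
  intro h
  obtain ⟨i, hi, hie⟩ := Finset.mem_image.mp h
  have hi' := Finset.mem_range.mp (hS hi)
  have : δ.take i = δ := hρ hie
  have := congrArg List.length this
  simp [List.length_take] at this
  omega

/-- The key expansion identity. -/
lemma rad_mul_prod_expand (hρ : Function.Injective (rho φ)) (δ : List Bool)
    (c : ℕ → ℝ) (ω : CantorGroup) :
    rad (rho φ δ) ω * ∏ i ∈ Finset.range δ.length, (1 + c i * rad (rho φ (δ.take i)) ω)
      = ∑ S ∈ (Finset.range δ.length).powerset, (∏ i ∈ S, c i) *
          walsh (insert (rho φ δ) (S.image (fun i => rho φ (δ.take i)))) ω := by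
  rw [prod_expand c _ _ (rho_take_injOn hρ δ) ω, Finset.mul_sum]
  refine Finset.sum_congr rfl fun S hS => ?_
  rw [← rad_mul_walsh (rho_self_not_mem hρ δ (Finset.mem_powerset.mp hS))]
  ring

lemma card_insert_image (hρ : Function.Injective (rho φ)) (δ : List Bool)
    {S : Finset ℕ} (hS : S ⊆ Finset.range δ.length) :
    (insert (rho φ δ) (S.image (fun i => rho φ (δ.take i)))).card = S.card + 1 := by
  rw [Finset.card_insert_of_notMem (rho_self_not_mem hρ δ hS),
    Finset.card_image_of_injOn ((rho_take_injOn hρ δ).mono (by exact_mod_cast hS))]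

end KExp

section PartOne
variable {φ : List Bool → ℕ}

lemma kSys_eq_sum (hρ : Function.Injective (rho φ)) (δ : List Bool) :
    kSys φ δ = ∑ S ∈ (Finset.range δ.length).powerset,
      (∏ i ∈ S, sgn (δ.getD i true)) •
        walsh (insert (rho φ δ) (S.image fun i => rho φ (δ.take i))) := by
  funext ω
  rw [Finset.sum_apply]
  simp only [Pi.smul_apply, smul_eq_mul]
  exact rad_mul_prod_expand hρ δ _ ω

lemma T_kSys {ε : ℝ} (hρ : Function.Injective (rho φ))
    (T : (CantorGroup → ℝ) →ₗ[ℝ] (CantorGroup → ℝ))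
    (hT : ∀ A : Finset ℕ, T (walsh A) = fun ω => ε ^ A.card * walsh A ω) (δ : List Bool) :
    T (kSys φ δ) = fun ω => ε * rad (rho φ δ) ω *
      ∏ i ∈ Finset.range δ.length,
        (1 + ε * sgn (δ.getD i true) * rad (rho φ (δ.take i)) ω) := by
  rw [kSys_eq_sum hρ δ, map_sum]
  funext ω
  rw [Finset.sum_apply]
  have h1 : ∀ S ∈ (Finset.range δ.length).powerset,
      (T ((∏ i ∈ S, sgn (δ.getD i true)) •
          walsh (insert (rho φ δ) (S.image fun i => rho φ (δ.take i))))) ω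
      = (∏ i ∈ S, ε * sgn (δ.getD i true)) *
          (ε * walsh (insert (rho φ δ) (S.image fun i => rho φ (δ.take i))) ω) := by
    intro S hS
    rw [LinearMap.map_smul, hT]
    simp only [Pi.smul_apply, smul_eq_mul]
    rw [card_insert_image hρ δ (Finset.mem_powerset.mp hS), pow_succ,
      Finset.prod_mul_distrib, Finset.prod_const]
    ring
  rw [Finset.sum_congr rfl h1]
  have h2 := rad_mul_prod_expand hρ δ (fun i => ε * sgn (δ.getD i true)) ω
  rw [mul_assoc, h2, Finset.mul_sum]
  exact Finset.sum_congr rfl fun S hS => by ring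

end PartOne

section WP

/-- Walsh polynomials supported on subsets of `J`. -/
def IsWP (J : Finset ℕ) (g : CantorGroup → ℝ) : Prop :=
  ∃ c : Finset ℕ → ℝ, ∀ ω, g ω = ∑ S ∈ J.powerset, c S * walsh S ω

lemma IsWP.mono {J J' : Finset ℕ} (h : J ⊆ J') {g} (hg : IsWP J g) : IsWP J' g := by
  classical
  obtain ⟨c, hc⟩ := hg
  refine ⟨fun S => if S ∈ J.powerset then c S else 0, fun ω => ?_⟩
  show g ω = ∑ S ∈ J'.powerset, (if S ∈ J.powerset then c S else 0) * walsh S ω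
  rw [hc ω, ← Finset.sum_subset (Finset.powerset_mono.mpr h)
    (fun S _ hS => by rw [if_neg hS, zero_mul])]
  exact Finset.sum_congr rfl fun S hS => by rw [if_pos hS]

lemma isWP_const (J : Finset ℕ) (a : ℝ) : IsWP J (fun _ => a) := by
  classical
  refine ⟨fun S => if S = ∅ then a else 0, fun ω => ?_⟩
  show a = ∑ S ∈ J.powerset, (if S = ∅ then a else 0) * walsh S ω
  simp only [ite_mul, zero_mul]
  rw [Finset.sum_ite_eq' J.powerset ∅ (fun S => a * walsh S ω),
    if_pos (Finset.empty_mem_powerset J)]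
  simp [walsh]

lemma isWP_affine {J : Finset ℕ} {j : ℕ} (hj : j ∈ J) (a b : ℝ) :
    IsWP J (fun ω => a + b * rad j ω) := by
  classical
  refine ⟨fun S => if S = ∅ then a else if S = {j} then b else 0, fun ω => ?_⟩
  show a + b * rad j ω
      = ∑ S ∈ J.powerset, (if S = ∅ then a else if S = {j} then b else 0) * walsh S ω
  have key : ∀ S : Finset ℕ, (if S = ∅ then a else if S = {j} then b else 0) * walsh S ω
      = (if S = ∅ then a * walsh S ω else 0) + (if S = {j} then b * walsh S ω else 0) := by
    intro S
    by_cases h1 : S = ∅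
    · simp [h1, (Finset.singleton_ne_empty j).symm]
    · by_cases h2 : S = {j} <;> simp [h1, h2]
  simp only [key]
  rw [Finset.sum_add_distrib,
    Finset.sum_ite_eq' J.powerset ∅ (fun S => a * walsh S ω),
    Finset.sum_ite_eq' J.powerset {j} (fun S => b * walsh S ω),
    if_pos (Finset.empty_mem_powerset J),
    if_pos (Finset.mem_powerset.mpr (Finset.singleton_subset_iff.mpr hj))]
  simp [walsh]

lemma IsWP.mul {J : Finset ℕ} {f g} (hf : IsWP J f) (hg : IsWP J g) :
    IsWP J (fun ω => f ω * g ω) := by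
  classical
  obtain ⟨c, hc⟩ := hf
  obtain ⟨d, hd⟩ := hg
  refine ⟨fun U => ∑ S ∈ J.powerset, ∑ S' ∈ J.powerset,
    if symmDiff S S' = U then c S * d S' else 0, fun ω => ?_⟩
  show f ω * g ω = _
  rw [hc ω, hd ω, Finset.sum_mul_sum]
  symm
  calc ∑ U ∈ J.powerset, (∑ S ∈ J.powerset, ∑ S' ∈ J.powerset,
          if symmDiff S S' = U then c S * d S' else 0) * walsh U ω
      = ∑ S ∈ J.powerset, ∑ S' ∈ J.powerset, c S * d S' * walsh (symmDiff S S') ω := by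
        simp only [Finset.sum_mul]
        rw [Finset.sum_comm]
        refine Finset.sum_congr rfl fun S hS => ?_
        rw [Finset.sum_comm]
        refine Finset.sum_congr rfl fun S' hS' => ?_
        simp only [ite_mul, zero_mul]
        rw [Finset.sum_ite_eq, if_pos]
        exact Finset.mem_powerset.mpr (le_trans symmDiff_le_sup
          (sup_le (Finset.mem_powerset.mp hS) (Finset.mem_powerset.mp hS')))
    _ = ∑ S ∈ J.powerset, ∑ S' ∈ J.powerset, (c S * walsh S ω) * (d S' * walsh S' ω) := by
        refine Finset.sum_congr rfl fun S _ => Finset.sum_congr rfl fun S' _ => ?_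
        rw [← walsh_mul_walsh]; ring

end WP

lemma isWP_rad {J : Finset ℕ} {j : ℕ} (hj : j ∈ J) : IsWP J (rad j) := by
  have := isWP_affine hj 0 1
  simpa using this

lemma isWP_prod {α : Type*} {J : Finset ℕ} (s : Finset α) (F : α → CantorGroup → ℝ)
    (h : ∀ i ∈ s, IsWP J (F i)) : IsWP J (fun ω => ∏ i ∈ s, F i ω) := by
  classical
  induction s using Finset.induction_on with
  | empty => simpa using isWP_const J 1
  | insert x s' hx ih =>
    simp only [Finset.prod_insert hx]
    exact (h x (Finset.mem_insert_self x s')).mul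
      (ih fun i hi => h i (Finset.mem_insert_of_mem hi))

lemma IsWP.integrable {J : Finset ℕ} {g} (hg : IsWP J g)
    (μ : Measure CantorGroup) [IsProbabilityMeasure μ] : Integrable g μ := by
  obtain ⟨c, hc⟩ := hg
  have : g = fun ω => ∑ S ∈ J.powerset, c S * walsh S ω := funext hc
  rw [this]
  exact integrable_finset_sum _ fun S _ => (walsh_integrable μ S).const_mul _

lemma integral_rad_mul_isWP {μ : Measure CantorGroup} [IsProbabilityMeasure μ]
    (hμ : ∀ A : Finset ℕ, A.Nonempty → ∫ ω, walsh A ω ∂μ = 0)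
    {J : Finset ℕ} {j0 : ℕ} (hj0 : j0 ∉ J) {g} (hg : IsWP J g) :
    ∫ ω, rad j0 ω * g ω ∂μ = 0 := by
  obtain ⟨c, hc⟩ := hg
  have h1 : ∀ ω : CantorGroup, rad j0 ω * g ω
      = ∑ S ∈ J.powerset, c S * walsh (insert j0 S) ω := by
    intro ω
    rw [hc ω, Finset.mul_sum]
    refine Finset.sum_congr rfl fun S hS => ?_
    rw [← rad_mul_walsh (fun hm => hj0 (Finset.mem_powerset.mp hS hm))]
    ring
  rw [integral_congr_ae (Filter.Eventually.of_forall h1),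
    integral_finset_sum _ fun S _ => (walsh_integrable μ _).const_mul _]
  refine Finset.sum_eq_zero fun S _ => ?_
  rw [MeasureTheory.integral_const_mul, hμ _ (Finset.insert_nonempty _ _), mul_zero]

lemma ite_coord (j : ℕ) (c : ℤˣ) (ω : CantorGroup) :
    (if ω j = c then (1:ℝ) else 0) = (1 + ((c : ℤ) : ℝ) * rad j ω) / 2 := by
  rcases Int.units_eq_one_or (ω j) with h | h <;> rcases Int.units_eq_one_or c with h2 | h2 <;>
    simp [h, h2, rad] <;> norm_num

section Master
variable {φ : List Bool → ℕ} {P : List Bool → Prop}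

lemma ite_atom_eq_prod [Fintype {l : List Bool // P l}]
    (p : {l : List Bool // P l} → ℤˣ) (ω : CantorGroup) :
    (if (fun η : {l : List Bool // P l} => ω (rho φ η.1)) = p then (1:ℝ) else 0)
      = ∏ η : {l : List Bool // P l}, ((1 + ((p η : ℤ) : ℝ) * rad (rho φ η.1) ω) / 2) := by
  classical
  have hiff : ((fun η : {l : List Bool // P l} => ω (rho φ η.1)) = p)
      ↔ ∀ η : {l : List Bool // P l}, ω (rho φ η.1) = p η := funext_iff
  by_cases h : (fun η : {l : List Bool // P l} => ω (rho φ η.1)) = p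
  · rw [if_pos h]
    symm
    refine Finset.prod_eq_one fun η _ => ?_
    rw [← ite_coord, if_pos (hiff.mp h η)]
  · rw [if_neg h]
    obtain ⟨η, hη⟩ := not_forall.mp (fun hc => h (hiff.mpr hc))
    symm
    refine Finset.prod_eq_zero (Finset.mem_univ η) ?_
    rw [← ite_coord, if_neg hη]

lemma isWP_atom [Fintype {l : List Bool // P l}] (p : {l : List Bool // P l} → ℤˣ) :
    IsWP (Finset.univ.image (fun η : {l : List Bool // P l} => rho φ η.1))
      (fun ω => ∏ η : {l : List Bool // P l},
        ((1 + ((p η : ℤ) : ℝ) * rad (rho φ η.1) ω) / 2)) := by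
  refine isWP_prod Finset.univ _ fun η _ => ?_
  have h1 : (fun ω => (1 + ((p η : ℤ) : ℝ) * rad (rho φ η.1) ω) / 2)
      = fun ω => (1/2 : ℝ) + (((p η : ℤ) : ℝ)/2) * rad (rho φ η.1) ω := by
    funext ω; ring
  rw [h1]
  exact isWP_affine (Finset.mem_image_of_mem _ (Finset.mem_univ η)) _ _

lemma condexp_rad_mul_isWP (μ : Measure CantorGroup) [IsProbabilityMeasure μ]
    (hμ : ∀ A : Finset ℕ, A.Nonempty → ∫ ω, walsh A ω ∂μ = 0)
    (φ : List Bool → ℕ) (P : List Bool → Prop) [Finite {l : List Bool // P l}]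
    {j0 : ℕ} (hj0P : ∀ l, P l → rho φ l ≠ j0)
    {J : Finset ℕ} (hj0J : j0 ∉ J) {g} (hg : IsWP J g) :
    μ[(fun ω => rad j0 ω * g ω) |
      MeasurableSpace.comap
        (fun ω => fun η : {l : List Bool // P l} => ω (rho φ η.1)) inferInstance] =ᵐ[μ] 0 := by
  classical
  haveI : Fintype {l : List Bool // P l} := Fintype.ofFinite _
  set F : CantorGroup → ({l : List Bool // P l} → ℤˣ) :=
    fun ω => fun η => ω (rho φ η.1) with hF
  have hFmeas : Measurable F := measurable_pi_lambda _ fun η => measurable_pi_apply _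
  have hm : MeasurableSpace.comap F inferInstance
      ≤ (inferInstance : MeasurableSpace CantorGroup) := hFmeas.comap_le
  set bigJ : Finset ℕ :=
    J ∪ Finset.univ.image (fun η : {l : List Bool // P l} => rho φ η.1) with hbigJ
  have hj0big : j0 ∉ bigJ := by
    rw [hbigJ, Finset.mem_union]
    rintro (h | h)
    · exact hj0J h
    · obtain ⟨η, _, hη⟩ := Finset.mem_image.mp h
      exact hj0P η.1 η.2 hη
  have hf : Integrable (fun ω => rad j0 ω * g ω) μ :=
    ((isWP_rad (Finset.mem_insert_self j0 J)).mul
      (hg.mono (Finset.subset_insert j0 J))).integrable μ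
  refine (ae_eq_condExp_of_forall_setIntegral_eq hm hf
    (fun s _ _ => integrableOn_zero) (fun s hs _ => ?_) ?_).symm
  swap
  · exact StronglyMeasurable.aestronglyMeasurable
      (@stronglyMeasurable_zero _ _ (MeasurableSpace.comap F inferInstance) _ _)
  · have hsm : MeasurableSet s := hm _ hs
    obtain ⟨t, _, rfl⟩ := MeasurableSpace.measurableSet_comap.mp hs
    rw [integral_zero]
    symm
    rw [← integral_indicator hsm]
    set ft : Finset ({l : List Bool // P l} → ℤˣ) := (Set.toFinite t).toFinset with hft
    have hptwise : ∀ ω, (F ⁻¹' t).indicator (fun ω => rad j0 ω * g ω) ω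
        = ∑ p ∈ ft, rad j0 ω *
            ((∏ η : {l : List Bool // P l},
              ((1 + ((p η : ℤ) : ℝ) * rad (rho φ η.1) ω) / 2)) * g ω) := by
      intro ω
      have h1 : (F ⁻¹' t).indicator (fun ω => rad j0 ω * g ω) ω
          = (if F ω ∈ t then (1:ℝ) else 0) * (rad j0 ω * g ω) := by
        by_cases h : F ω ∈ t
        · rw [Set.indicator_of_mem (show ω ∈ F ⁻¹' t from h), if_pos h, one_mul]
        · rw [Set.indicator_of_notMem (show ω ∉ F ⁻¹' t from h), if_neg h, zero_mul]
      have h2 : (if F ω ∈ t then (1:ℝ) else 0) = ∑ p ∈ ft, if F ω = p then (1:ℝ) else 0 := by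
        rw [Finset.sum_ite_eq ft (F ω) (fun _ => (1:ℝ))]
        simp [hft]
      rw [h1, h2, Finset.sum_mul]
      refine Finset.sum_congr rfl fun p _ => ?_
      rw [show (if F ω = p then (1:ℝ) else 0)
          = ∏ η : {l : List Bool // P l}, ((1 + ((p η : ℤ) : ℝ) * rad (rho φ η.1) ω) / 2)
        from ite_atom_eq_prod p ω]
      ring
    have hWP : ∀ p : {l : List Bool // P l} → ℤˣ,
        IsWP bigJ (fun ω => (∏ η : {l : List Bool // P l},
          ((1 + ((p η : ℤ) : ℝ) * rad (rho φ η.1) ω) / 2)) * g ω) :=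
      fun p => ((isWP_atom p).mono Finset.subset_union_right).mul
        (hg.mono Finset.subset_union_left)
    rw [integral_congr_ae (Filter.Eventually.of_forall hptwise),
      integral_finset_sum _ (fun p _ => ((isWP_rad (Finset.mem_insert_self j0 bigJ)).mul
        ((hWP p).mono (Finset.subset_insert j0 bigJ))).integrable μ)]
    exact Finset.sum_eq_zero fun p _ => integral_rad_mul_isWP hμ hj0big (hWP p)

end Master

section Main
variable {φ : List Bool → ℕ} {ε : ℝ}

/-- The image of `k_δ` under the biased coin operator. -/
noncomputable def gfun (φ : List Bool → ℕ) (ε : ℝ) (δ : List Bool) (ω : CantorGroup) : ℝ :=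
  rad (rho φ δ) ω * (ε * ∏ i ∈ Finset.range δ.length,
    (1 + ε * sgn (δ.getD i true) * rad (rho φ (δ.take i)) ω))

lemma gfun_eq (hρ : Function.Injective (rho φ))
    (T : (CantorGroup → ℝ) →ₗ[ℝ] (CantorGroup → ℝ))
    (hT : ∀ A : Finset ℕ, T (walsh A) = fun ω => ε ^ A.card * walsh A ω) (δ : List Bool) :
    T (kSys φ δ) = gfun φ ε δ := by
  rw [T_kSys hρ T hT δ]
  funext ω
  unfold gfun
  ring

lemma isWP_gbody (δ : List Bool) :
    IsWP ((Finset.range δ.length).image fun i => rho φ (δ.take i))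
      (fun ω => ε * ∏ i ∈ Finset.range δ.length,
        (1 + ε * sgn (δ.getD i true) * rad (rho φ (δ.take i)) ω)) := by
  refine (isWP_const _ ε).mul (isWP_prod _ _ fun i hi => ?_)
  exact isWP_affine (Finset.mem_image_of_mem _ hi) 1 (ε * sgn (δ.getD i true))

lemma isWP_gfun (hρ : Function.Injective (rho φ)) (δ : List Bool) :
    IsWP (insert (rho φ δ) ((Finset.range δ.length).image fun i => rho φ (δ.take i)))
      (gfun φ ε δ) :=
  (isWP_rad (Finset.mem_insert_self _ _)).mul
    ((isWP_gbody δ).mono (Finset.subset_insert _ _))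

lemma gfun_integrable (hρ : Function.Injective (rho φ))
    (μ : Measure CantorGroup) [IsProbabilityMeasure μ] (δ : List Bool) :
    Integrable (gfun φ ε δ) μ :=
  (isWP_gfun hρ δ).integrable μ

lemma abs_sgn (b : Bool) : |sgn b| = 1 := by
  unfold sgn; cases b <;> simp

lemma abs_gfun (hε0 : 0 < ε) (hε1 : ε < 1) (δ : List Bool) (ω : CantorGroup) :
    |gfun φ ε δ ω| = ε * ∏ i ∈ Finset.range δ.length,
      (1 + ε * sgn (δ.getD i true) * rad (rho φ (δ.take i)) ω) := by
  have hpos : ∀ i ∈ Finset.range δ.length,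
      0 < 1 + ε * sgn (δ.getD i true) * rad (rho φ (δ.take i)) ω := by
    intro i _
    have h1 : |ε * sgn (δ.getD i true) * rad (rho φ (δ.take i)) ω| = ε := by
      rw [abs_mul, abs_mul, abs_sgn, abs_rad, abs_of_pos hε0]; ring
    nlinarith [abs_le.mp (le_of_eq h1)]
  unfold gfun
  rw [abs_mul, abs_rad, one_mul, abs_mul, abs_of_pos hε0, Finset.abs_prod,
    Finset.prod_congr rfl fun i hi => abs_of_pos (hpos i hi)]

lemma integral_abs_gfun (hρ : Function.Injective (rho φ)) (hε0 : 0 < ε) (hε1 : ε < 1)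
    (μ : Measure CantorGroup) [IsProbabilityMeasure μ]
    (hμ : ∀ A : Finset ℕ, A.Nonempty → ∫ ω, walsh A ω ∂μ = 0) (δ : List Bool) :
    ∫ ω, |gfun φ ε δ ω| ∂μ = ε := by
  rw [integral_congr_ae (Filter.Eventually.of_forall (abs_gfun hε0 hε1 δ)),
    MeasureTheory.integral_const_mul,
    integral_prod_expand hμ (fun i => ε * sgn (δ.getD i true)) _ _ (rho_take_injOn hρ δ),
    mul_one]

lemma condexp_gfun_zero (μ : Measure CantorGroup) [IsProbabilityMeasure μ]
    (hμ : ∀ A : Finset ℕ, A.Nonempty → ∫ ω, walsh A ω ∂μ = 0)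
    (hρ : Function.Injective (rho φ)) (P : List Bool → Prop) [Finite {l : List Bool // P l}]
    (δ : List Bool) (hP : ∀ l, P l → l ≠ δ) :
    μ[gfun φ ε δ |
      MeasurableSpace.comap
        (fun ω => fun η : {l : List Bool // P l} => ω (rho φ η.1)) inferInstance] =ᵐ[μ] 0 := by
  have hj0P : ∀ l, P l → rho φ l ≠ rho φ δ := fun l hl he => hP l hl (hρ he)
  have hj0J : rho φ δ ∉ (Finset.range δ.length).image fun i => rho φ (δ.take i) :=
    rho_self_not_mem hρ δ (Finset.Subset.refl _)
  exact condexp_rad_mul_isWP μ hμ φ P hj0P hj0J (isWP_gbody δ)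

lemma measurable_gfun_comap (P : List Bool → Prop) (δ : List Bool)
    (hδ : P δ) (hpre : ∀ i, i < δ.length → P (δ.take i)) :
    Measurable[MeasurableSpace.comap
        (fun ω => fun η : {l : List Bool // P l} => ω (rho φ η.1)) inferInstance]
      (gfun φ ε δ) := by
  have hrad : ∀ l (hl : P l),
      Measurable[MeasurableSpace.comap
        (fun ω => fun η : {l' : List Bool // P l'} => ω (rho φ η.1)) inferInstance]
      (fun ω => rad (rho φ l) ω) := by
    intro l hl
    have heq : (fun ω : CantorGroup => rad (rho φ l) ω)
        = (fun v : {l' : List Bool // P l'} → ℤˣ => ((v ⟨l, hl⟩ : ℤ) : ℝ))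
          ∘ (fun ω => fun η : {l' : List Bool // P l'} => ω (rho φ η.1)) := rfl
    rw [heq]
    exact ((measurable_from_top (f := fun z : ℤ => (z : ℝ))).comp
      ((measurable_iff_comap_le.mpr le_rfl).comp (measurable_pi_apply _))).comp
      (Measurable.of_comap_le le_rfl)
  unfold gfun
  refine (hrad δ hδ).mul (Measurable.const_mul (Finset.measurable_prod _ fun i hi => ?_) ε)
  exact ((hrad (δ.take i) (hpre i (Finset.mem_range.mp hi))).const_mul _).const_add 1

end Main

section Step
variable {φ : List Bool → ℕ} {ε : ℝ}

/-- One-step monotonicity of L¹ norms of partial sums (martingale difference property). -/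
lemma step_mono (μ : Measure CantorGroup) [IsProbabilityMeasure μ]
    (hμ : ∀ A : Finset ℕ, A.Nonempty → ∫ ω, walsh A ω ∂μ = 0)
    (hρ : Function.Injective (rho φ))
    (u : ℕ → List Bool) (huinj : Function.Injective u)
    (hlen : ∀ k l, k ≤ l → (u k).length ≤ (u l).length)
    (a : ℕ → ℝ) (m : ℕ) :
    ∫ ω, |∑ k ∈ Finset.range m, a k * gfun φ ε (u k) ω| ∂μ
      ≤ ∫ ω, |∑ k ∈ Finset.range (m+1), a k * gfun φ ε (u k) ω| ∂μ := by
  classical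
  set P : List Bool → Prop := fun l => l.length < (u m).length ∨ ∃ j, j < m ∧ u j = l with hPdef
  haveI : Finite {l : List Bool // P l} := by
    refine Set.Finite.to_subtype
      (Set.Finite.subset (List.finite_length_lt Bool ((u m).length + 1)) ?_)
    rintro l (h | ⟨j, hj, rfl⟩)
    · exact Nat.lt_succ_of_lt h
    · exact Nat.lt_succ_of_le (hlen j m (le_of_lt hj))
  have hm0 : MeasurableSpace.comap
      (fun ω : CantorGroup => fun η : {l : List Bool // P l} => ω (rho φ η.1))
      inferInstance ≤ (MeasurableSpace.pi : MeasurableSpace CantorGroup) :=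
    (measurable_pi_lambda _ fun η => measurable_pi_apply _).comap_le
  set H := MeasurableSpace.comap
    (fun ω : CantorGroup => fun η : {l : List Bool // P l} => ω (rho φ η.1))
    inferInstance with hH
  set Sm : CantorGroup → ℝ := fun ω => ∑ k ∈ Finset.range m, a k * gfun φ ε (u k) ω with hSm
  have hintk : ∀ k, Integrable (fun ω => a k * gfun φ ε (u k) ω) μ :=
    fun k => (gfun_integrable hρ μ (u k)).const_mul _
  have hintS : Integrable Sm μ := integrable_finset_sum _ fun k _ => hintk k
  have hmeasS : Measurable[H] Sm := by
    refine Finset.measurable_sum _ fun k hk => Measurable.const_mul ?_ _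
    have hk' := Finset.mem_range.mp hk
    refine measurable_gfun_comap P (u k) (Or.inr ⟨k, hk', rfl⟩) fun i hi => Or.inl ?_
    have h1 : ((u k).take i).length = i := by
      rw [List.length_take]; omega
    rw [h1]
    exact lt_of_lt_of_le hi (hlen k m (le_of_lt hk'))
  have hcond : μ[gfun φ ε (u m) | H] =ᵐ[μ] 0 := by
    rw [hH]
    refine condexp_gfun_zero μ hμ hρ P (u m) ?_
    rintro l (h | ⟨j, hj, rfl⟩) he
    · rw [he] at h; omega
    · exact absurd (huinj he) (Nat.ne_of_lt hj)
  have hsplit : (fun ω => ∑ k ∈ Finset.range (m+1), a k * gfun φ ε (u k) ω)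
      = Sm + a m • gfun φ ε (u m) := by
    funext ω
    simp [hSm, Finset.sum_range_succ]
  have hSmc : Sm =ᵐ[μ] μ[(fun ω => ∑ k ∈ Finset.range (m+1), a k * gfun φ ε (u k) ω) | H] := by
    rw [hsplit]
    have h1 := condExp_add (μ := μ) (m := H) hintS
      (((gfun_integrable (ε := ε) hρ μ (u m))).smul (a m))
    have h2 : μ[Sm | H] = Sm :=
      condExp_of_stronglyMeasurable hm0 hmeasS.stronglyMeasurable hintS
    have h3 := condExp_smul (μ := μ) (m := H) (a m) (gfun φ ε (u m))
    refine (h1.trans ?_).symm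
    rw [h2]
    have : a m • μ[gfun φ ε (u m) | H] =ᵐ[μ] 0 := by
      filter_upwards [hcond] with ω hω
      simp [hω]
    filter_upwards [h3, this] with ω h3ω hω
    simp only [Pi.add_apply, Pi.zero_apply] at h3ω hω ⊢
    rw [h3ω, hω, add_zero]
  calc ∫ ω, |Sm ω| ∂μ
      = ∫ ω, |(μ[(fun ω => ∑ k ∈ Finset.range (m+1), a k * gfun φ ε (u k) ω) | H]) ω| ∂μ := by
        refine integral_congr_ae ?_
        filter_upwards [hSmc] with ω hω
        rw [hω]
    _ ≤ ∫ ω, |∑ k ∈ Finset.range (m+1), a k * gfun φ ε (u k) ω| ∂μ :=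
        integral_abs_condExp_le _

end Step

/-- With `T_ε` the biased coin operator (acting on Walsh functions by
`T_ε w_A = ε^{|A|} w_A`) and `(k_δ)` the re-indexed Haar-type system, the images satisfy
`T_ε k_δ = ε r_{φ(δ)} ∏_{i=1}^n (1 + ε δ_i r_{φ(δ₁,…,δ_{i−1})})`; arranged in any order `u`
compatible with prefix length they form a martingale difference sequence with respect to the
filtration generated by the previous coordinates, hence a monotone basic sequence in `L¹`,
and consequently the biorthogonal functionals all have norm at most `2/ε`. -/
theorem biased_coin_kSys_monotone_basic
    (μ : Measure CantorGroup) [IsProbabilityMeasure μ]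
    (hμ : ∀ A : Finset ℕ, A.Nonempty → ∫ ω, walsh A ω ∂μ = 0)
    (φ : List Bool → ℕ) (hφinj : Function.Injective φ)
    (hφ2 : ∀ δ, 2 ≤ φ δ)
    (hφmono : ∀ (δ : List Bool) (b : Bool), φ δ < φ (δ ++ [b]))
    (ε : ℝ) (hε0 : 0 < ε) (hε1 : ε < 1)
    (T : (CantorGroup → ℝ) →ₗ[ℝ] (CantorGroup → ℝ))
    (hT : ∀ A : Finset ℕ, T (walsh A) = fun ω => ε ^ A.card * walsh A ω)
    (u : ℕ → List Bool) (hu : Function.Bijective u)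
    (hlen : ∀ k l, k ≤ l → (u k).length ≤ (u l).length) :
    (∀ δ : List Bool, T (kSys φ δ) = fun ω => ε * rad (rho φ δ) ω *
        ∏ i ∈ Finset.range δ.length,
          (1 + ε * sgn (δ.getD i true) * rad (rho φ (δ.take i)) ω)) ∧
    (∀ k : ℕ, μ[T (kSys φ (u k)) | Gsig φ (u k).length] =ᵐ[μ] 0) ∧
    (∀ (a : ℕ → ℝ) (m n : ℕ), m ≤ n →
      ∫ ω, |∑ k ∈ Finset.range m, a k * T (kSys φ (u k)) ω| ∂μ ≤
        ∫ ω, |∑ k ∈ Finset.range n, a k * T (kSys φ (u k)) ω| ∂μ) ∧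
    (∀ (a : ℕ → ℝ) (n k : ℕ), k < n →
      |a k| ≤ (2 / ε) * ∫ ω, |∑ j ∈ Finset.range n, a j * T (kSys φ (u j)) ω| ∂μ) := by
  classical
  have hρ : Function.Injective (rho φ) := rho_inj hφinj hφ2
  have hTk : ∀ δ, T (kSys φ δ) = gfun φ ε δ := gfun_eq hρ T hT
  have hmono : ∀ (a : ℕ → ℝ) {p q : ℕ}, p ≤ q →
      ∫ ω, |∑ j ∈ Finset.range p, a j * gfun φ ε (u j) ω| ∂μ
        ≤ ∫ ω, |∑ j ∈ Finset.range q, a j * gfun φ ε (u j) ω| ∂μ :=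
    fun a {p q} h => monotone_nat_of_le_succ
      (f := fun N => ∫ ω, |∑ j ∈ Finset.range N, a j * gfun φ ε (u j) ω| ∂μ)
      (fun N => step_mono μ hμ hρ u hu.injective hlen a N) h
  refine ⟨T_kSys hρ T hT, ?_, ?_, ?_⟩
  · -- martingale difference property
    intro k
    haveI : Finite {l : List Bool // l.length < (u k).length} :=
      (List.finite_length_lt Bool (u k).length).to_subtype
    rw [hTk (u k)]
    exact condexp_gfun_zero (ε := ε) μ hμ hρ (fun l => l.length < (u k).length) (u k)
      (fun l hl he => by rw [he] at hl; omega)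
  · -- monotonicity
    intro a m n hmn
    simp only [hTk]
    exact hmono a hmn
  · -- biorthogonal functionals
    intro a n k hkn
    simp only [hTk]
    have hint : ∀ j, Integrable (fun ω => a j * gfun φ ε (u j) ω) μ :=
      fun j => ((gfun_integrable (ε := ε) hρ μ (u j))).const_mul _
    have hintS : ∀ N, Integrable (fun ω => ∑ j ∈ Finset.range N, a j * gfun φ ε (u j) ω) μ :=
      fun N => integrable_finset_sum _ fun j _ => hint j
    have h1 : ∫ ω, |a k * gfun φ ε (u k) ω| ∂μ = |a k| * ε := by
      rw [integral_congr_ae (Filter.Eventually.of_forall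
          (fun ω => abs_mul (a k) (gfun φ ε (u k) ω))),
        MeasureTheory.integral_const_mul, integral_abs_gfun hρ hε0 hε1 μ hμ (u k)]
    have h3 : ∫ ω, |a k * gfun φ ε (u k) ω| ∂μ
        ≤ (∫ ω, |∑ j ∈ Finset.range (k+1), a j * gfun φ ε (u j) ω| ∂μ)
          + ∫ ω, |∑ j ∈ Finset.range k, a j * gfun φ ε (u j) ω| ∂μ := by
      rw [← integral_add ((hintS (k+1)).abs) ((hintS k).abs)]
      refine integral_mono ((hint k).abs) (((hintS (k+1)).abs).add ((hintS k).abs)) fun ω => ?_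
      have h2 : a k * gfun φ ε (u k) ω
          = (∑ j ∈ Finset.range (k+1), a j * gfun φ ε (u j) ω)
            - ∑ j ∈ Finset.range k, a j * gfun φ ε (u j) ω := by
        rw [Finset.sum_range_succ]; ring
      show |a k * gfun φ ε (u k) ω| ≤ _
      rw [h2]
      exact abs_sub _ _
    have h4 : |a k| * ε ≤ 2 * ∫ ω, |∑ j ∈ Finset.range n, a j * gfun φ ε (u j) ω| ∂μ := by
      rw [← h1]
      refine h3.trans ?_
      have ha := hmono a (Nat.succ_le_of_lt hkn)
      have hb := hmono a (le_of_lt hkn)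
      linarith
    have h5 : |a k| ≤ 2 * (∫ ω, |∑ j ∈ Finset.range n, a j * gfun φ ε (u j) ω| ∂μ) / ε :=
      (le_div_iff₀ hε0).mpr h4
    have h6 : (2 / ε) * ∫ ω, |∑ j ∈ Finset.range n, a j * gfun φ ε (u j) ω| ∂μ
        = 2 * (∫ ω, |∑ j ∈ Finset.range n, a j * gfun φ ε (u j) ω| ∂μ) / ε := by
      ring
    rw [h6]
    exact h5
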